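/- Assume that for every ε > 0 there exists C > 0 such that ‖σ(τ,j)‖ ≥ C·exp(−ε·w(τ,j)) for all (τ,j) ∈ ℤ^m×ℕ with ‖σ(τ,j)‖ ≠ 0. Then the system is globally solvable at the Fourier coefficient level: for every admissible family (f_1,…,f_ℓ) in which each f_r has GS-growth there exists u : ℤ^m×ℕ → ℂ with GS-growth such that σ_r(τ,j)·u(τ,j) = f_r(τ,j) for all 1 ≤ r ≤ ℓ and all (τ,j). -/

import Mathlib

open Real

/-- Euclidean norm of an integer vector `τ ∈ ℤ^m`. -/
noncomputable def eNormZ {m : ℕ} (τ : Fin m → ℤ) : ℝ :=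
  Real.sqrt (∑ i, ((τ i : ℝ)) ^ 2)

/-- The weight `w(τ,j) = ‖τ‖^(1/σ) + j^(1/(2nμ))`. -/
noncomputable def wgt (m n : ℕ) (σ μ : ℝ) (τ : Fin m → ℤ) (j : ℕ) : ℝ :=
  eNormZ τ ^ (1 / σ) + (j : ℝ) ^ (1 / (2 * n * μ))

/-- GS-decay: `|a(τ,j)| ≤ C exp(-ε w(τ,j))` for some `C, ε > 0`. -/
def GSDecay (m n : ℕ) (σ μ : ℝ) (a : (Fin m → ℤ) → ℕ → ℂ) : Prop :=
  ∃ C > 0, ∃ ε > 0, ∀ τ j, ‖a τ j‖ ≤ C * Real.exp (-ε * wgt m n σ μ τ j)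

/-- GS-growth: for all `ε > 0` there is `C > 0` with `|a(τ,j)| ≤ C exp(ε w(τ,j))`. -/
def GSGrowth (m n : ℕ) (σ μ : ℝ) (a : (Fin m → ℤ) → ℕ → ℂ) : Prop :=
  ∀ ε > 0, ∃ C > 0, ∀ τ j, ‖a τ j‖ ≤ C * Real.exp (ε * wgt m n σ μ τ j)

/-- Symbol of the operator `L_r = Q_r(D_t) + d_r P(x,D_x)`: `σ_r(τ,j) = Q_r(τ) + d_r λ_j`. -/
noncomputable def symb {m ℓ : ℕ} (Q : Fin ℓ → MvPolynomial (Fin m) ℂ)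
    (d : Fin ℓ → ℂ) (lam : ℕ → ℝ) (r : Fin ℓ) (τ : Fin m → ℤ) (j : ℕ) : ℂ :=
  MvPolynomial.eval (fun i => ((τ i : ℂ))) (Q r) + d r * (lam j : ℂ)

/-- `‖σ(τ,j)‖ = max_{1 ≤ r ≤ ℓ} |σ_r(τ,j)|`. -/
noncomputable def symbNorm {m ℓ : ℕ} (Q : Fin ℓ → MvPolynomial (Fin m) ℂ)
    (d : Fin ℓ → ℂ) (lam : ℕ → ℝ) (τ : Fin m → ℤ) (j : ℕ) : ℝ :=
  ⨆ r : Fin ℓ, ‖symb Q d lam r τ j‖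

/-- The Diophantine condition (DC). -/
def DioCond (m n ℓ : ℕ) (σ μ : ℝ) (Q : Fin ℓ → MvPolynomial (Fin m) ℂ)
    (d : Fin ℓ → ℂ) (lam : ℕ → ℝ) : Prop :=
  ∀ ε > 0, ∃ C > 0, ∀ τ j, symbNorm Q d lam τ j ≠ 0 →
    symbNorm Q d lam τ j ≥ C * Real.exp (-ε * wgt m n σ μ τ j)

/-- Global hypoellipticity at the Fourier coefficient level. -/
def GloballyHypoelliptic (m n ℓ : ℕ) (σ μ : ℝ) (Q : Fin ℓ → MvPolynomial (Fin m) ℂ)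
    (d : Fin ℓ → ℂ) (lam : ℕ → ℝ) : Prop :=
  ∀ u : (Fin m → ℤ) → ℕ → ℂ, GSGrowth m n σ μ u →
    (∀ r : Fin ℓ, GSDecay m n σ μ (fun τ j => symb Q d lam r τ j * u τ j)) →
    GSDecay m n σ μ u

/-- Admissible families (compatibility conditions). -/
def Admissible {m ℓ : ℕ} (Q : Fin ℓ → MvPolynomial (Fin m) ℂ) (d : Fin ℓ → ℂ)
    (lam : ℕ → ℝ) (f : Fin ℓ → (Fin m → ℤ) → ℕ → ℂ) : Prop :=
  (∀ r s τ j, symb Q d lam r τ j * f s τ j = symb Q d lam s τ j * f r τ j) ∧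
  (∀ r τ j, symb Q d lam r τ j = 0 → f r τ j = 0)

/-- Global solvability at the Fourier coefficient level. -/
def GloballySolvable (m n ℓ : ℕ) (σ μ : ℝ) (Q : Fin ℓ → MvPolynomial (Fin m) ℂ)
    (d : Fin ℓ → ℂ) (lam : ℕ → ℝ) : Prop :=
  ∀ f : Fin ℓ → (Fin m → ℤ) → ℕ → ℂ, Admissible Q d lam f →
    (∀ r, GSGrowth m n σ μ (f r)) →
    ∃ u : (Fin m → ℤ) → ℕ → ℂ, GSGrowth m n σ μ u ∧
      ∀ r τ j, symb Q d lam r τ j * u τ j = f r τ j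

/-- the Diophantine condition (DC) implies global solvability. -/
theorem statement6 (m n ℓ : ℕ) (hm : 1 ≤ m) (hn : 1 ≤ n) (hℓ : 1 ≤ ℓ)
    (σ μ : ℝ) (hσ : 1 ≤ σ) (hμ : 1 / 2 ≤ μ)
    (Q : Fin ℓ → MvPolynomial (Fin m) ℂ) (d : Fin ℓ → ℂ) (lam : ℕ → ℝ)
    (hDC : ∀ ε > 0, ∃ C > 0, ∀ τ j, symbNorm Q d lam τ j ≠ 0 →
      symbNorm Q d lam τ j ≥ C * Real.exp (-ε * wgt m n σ μ τ j)) :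
    ∀ f : Fin ℓ → (Fin m → ℤ) → ℕ → ℂ, Admissible Q d lam f →
      (∀ r, GSGrowth m n σ μ (f r)) →
      ∃ u : (Fin m → ℤ) → ℕ → ℂ, GSGrowth m n σ μ u ∧
        ∀ r τ j, symb Q d lam r τ j * u τ j = f r τ j := by
  intro f hadm hf
  classical
  have hℓ' : Nonempty (Fin ℓ) := ⟨⟨0, hℓ⟩⟩
  have hmax : ∀ (τ : Fin m → ℤ) (j : ℕ), ∃ r₀ : Fin ℓ, ∀ r,
      ‖symb Q d lam r τ j‖ ≤ ‖symb Q d lam r₀ τ j‖ :=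
    fun τ j => Finite.exists_max _
  choose R hR using hmax
  have hsn : ∀ τ j, symbNorm Q d lam τ j = ‖symb Q d lam (R τ j) τ j‖ := by
    intro τ j
    apply le_antisymm
    · exact ciSup_le (hR τ j)
    · exact le_ciSup (f := fun r => ‖symb Q d lam r τ j‖)
        (Set.Finite.bddAbove (Set.finite_range _)) (R τ j)
  set u : (Fin m → ℤ) → ℕ → ℂ := fun τ j =>
    if symbNorm Q d lam τ j = 0 then 0 else f (R τ j) τ j / symb Q d lam (R τ j) τ j
    with hu
  have hzero : ∀ τ j, symbNorm Q d lam τ j = 0 → ∀ r, symb Q d lam r τ j = 0 := by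
    intro τ j h r
    have h1 : ‖symb Q d lam r τ j‖ ≤ 0 := by
      rw [hsn τ j] at h
      calc ‖symb Q d lam r τ j‖ ≤ _ := hR τ j r
        _ = 0 := h
    have := norm_nonneg (symb Q d lam r τ j)
    have : ‖symb Q d lam r τ j‖ = 0 := le_antisymm h1 this
    exact norm_eq_zero.mp this
  refine ⟨u, ?_, ?_⟩
  · intro ε hε
    obtain ⟨C, hC, hDC'⟩ := hDC (ε/2) (by linarith)
    choose Cf hCf hCfb using fun r => hf r (ε/2) (by linarith)
    obtain ⟨r₁, hr₁⟩ := Finite.exists_max Cf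
    refine ⟨Cf r₁ / C, div_pos (hCf r₁) hC, ?_⟩
    intro τ j
    by_cases h : symbNorm Q d lam τ j = 0
    · simp only [hu, h, if_pos, norm_zero]
      exact le_of_lt (mul_pos (div_pos (hCf r₁) hC) (Real.exp_pos _))
    · have hge := hDC' τ j h
      have hpos : 0 < symbNorm Q d lam τ j :=
        lt_of_lt_of_le (by positivity) hge
      have hne : symb Q d lam (R τ j) τ j ≠ 0 := by
        intro h0
        rw [hsn τ j, h0, norm_zero] at hpos
        exact lt_irrefl 0 hpos
      simp only [hu, if_neg h]
      rw [norm_div, ← hsn τ j]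
      have hnum : ‖f (R τ j) τ j‖ ≤ Cf r₁ * Real.exp (ε/2 * wgt m n σ μ τ j) := by
        calc ‖f (R τ j) τ j‖ ≤ Cf (R τ j) * Real.exp (ε/2 * wgt m n σ μ τ j) :=
              hCfb (R τ j) τ j
          _ ≤ Cf r₁ * Real.exp (ε/2 * wgt m n σ μ τ j) := by
              apply mul_le_mul_of_nonneg_right (hr₁ (R τ j)) (Real.exp_nonneg _)
      calc ‖f (R τ j) τ j‖ / symbNorm Q d lam τ j
          ≤ (Cf r₁ * Real.exp (ε/2 * wgt m n σ μ τ j)) / (C * Real.exp (-(ε/2) * wgt m n σ μ τ j)) := by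
            apply div_le_div₀ (le_of_lt (mul_pos (hCf r₁) (Real.exp_pos _))) hnum
              (by positivity) (by simpa using hge)
        _ = Cf r₁ / C * Real.exp (ε * wgt m n σ μ τ j) := by
            rw [mul_div_mul_comm, ← Real.exp_sub]
            congr 1
            ring
  · intro r τ j
    by_cases h : symbNorm Q d lam τ j = 0
    · have h1 := hzero τ j h r
      simp [hu, h, hadm.2 r τ j h1, h1]
    · have hge : 0 < symbNorm Q d lam τ j :=
        lt_of_le_of_ne (by rw [hsn]; exact norm_nonneg _) (Ne.symm h)
      have hne : symb Q d lam (R τ j) τ j ≠ 0 := by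
        intro h0
        rw [hsn τ j, h0, norm_zero] at hge
        exact lt_irrefl 0 hge
      simp only [hu, if_neg h]
      rw [mul_div_assoc', hadm.1 r (R τ j) τ j, mul_comm, mul_div_assoc,
        div_self hne, mul_one]
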